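/- arXiv:math/0311103 — 2 statements merged into one kernel-verified Lean document; each statement's English description precedes it below -/
import Mathlib

section
/- Lemma 6: let m ≥ 2 and let n be the least natural number (n ≥ 1) with G(n, m) = 0. Then n is even, say n = 2·n₁ with n₁ ≥ 2, and G(n₁ − 1, m) = n₁; that is, the hereditary representation of the (n₁−1)-th term in its base n₁ is 1·n₁^1 + 0·n₁^0. -/
/-- `hsub b u m` substitutes the value `u` for the base `b` throughout the
hereditary base-`b` representation of `m` (with `hsub b u 0 = 0`). -/
def hsub (b u : ℕ) (m : ℕ) : ℕ :=
  if m = 0 then 0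
  else
    u ^ hsub b u (Nat.log b m) * (m / b ^ Nat.log b m) + hsub b u (m % b ^ Nat.log b m)
termination_by m
decreasing_by
  · exact Nat.log_lt_self b (by assumption)
  · have hpos : 0 < b ^ Nat.log b m := by
      rcases Nat.eq_zero_or_pos b with hb | hb
      · simp [hb]
      · exact pow_pos hb _
    exact lt_of_lt_of_le (Nat.mod_lt _ hpos) (Nat.pow_log_le_self b (by assumption))

/-- Goodstein's base-change ("bumping") function: replace the base `b` by `b + 1`
throughout the hereditary base-`b` representation of `m` (with `B b 0 = 0`). -/
def B (b m : ℕ) : ℕ := hsub b (b + 1) m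

/-- The Goodstein sequence of `m`: `G 1 m = m`, and `G (k+1) m = B (k+1) (G k m) - 1`
for `k ≥ 1` (truncated subtraction), so the `k`-th term is written in hereditary
base `k + 1`. -/
def G : ℕ → ℕ → ℕ
  | 0, m => m
  | 1, m => m
  | (k + 2), m => B (k + 2) (G (k + 1) m) - 1

/-- The auxiliary Goodstein-type sequence: `L 1 k = k ^ k` (written in hereditary
base `k`), and `L (n+1) k = B (k+n-1) (L n k) - 1` for `n ≥ 1` (truncated
subtraction), so the `n`-th term is written in hereditary base `k + n - 1`. -/
def L : ℕ → ℕ → ℕ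
  | 0, k => k ^ k
  | 1, k => k ^ k
  | (n + 2), k => B (k + n) (L (n + 1) k) - 1

/-- `O b m` is the ordinal obtained by substituting `ω` for the base `b`
throughout the hereditary base-`b` representation of `m` (with `O b 0 = 0`). -/
noncomputable def O (b : ℕ) (m : ℕ) : Ordinal :=
  if m = 0 then 0
  else
    Ordinal.omega0 ^ O b (Nat.log b m) * ((m / b ^ Nat.log b m : ℕ) : Ordinal)
      + O b (m % b ^ Nat.log b m)
termination_by m
decreasing_by
  · exact Nat.log_lt_self b (by assumption)
  · have hpos : 0 < b ^ Nat.log b m := by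
      rcases Nat.eq_zero_or_pos b with hb | hb
      · simp [hb]
      · exact pow_pos hb _
    exact lt_of_lt_of_le (Nat.mod_lt _ hpos) (Nat.pow_log_le_self b (by assumption))

lemma hsub_zero (b u : ℕ) : hsub b u 0 = 0 := by rw [hsub]; simp

lemma hsub_lt (b u x : ℕ) (h : x < b) : hsub b u x = x := by
  rcases Nat.eq_zero_or_pos x with h0 | h0
  · simp [h0, hsub_zero]
  · rw [hsub]
    have hlog : Nat.log b x = 0 := Nat.log_eq_zero_iff.mpr (Or.inl h)
    simp [Nat.pos_iff_ne_zero.mp h0, hlog, hsub_zero, Nat.mod_one]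

lemma hsub_self (b u : ℕ) (hb : 2 ≤ b) : hsub b u b = u := by
  rw [hsub]
  have hlog : Nat.log b b = 1 := Nat.log_eq_one_iff'.mpr ⟨le_refl b, by nlinarith⟩
  have h1 : hsub b u 1 = 1 := hsub_lt b u 1 (by omega)
  have hb0 : b ≠ 0 := by omega
  simp [hb0, hlog, h1, Nat.div_self (by omega : 0 < b), Nat.mod_self, hsub_zero]

lemma hsub_ge (b : ℕ) (hb : 2 ≤ b) (x : ℕ) : x ≤ hsub b (b+1) x := by
  induction x using Nat.strong_induction_on with
  | _ x ih =>
    rcases Nat.eq_zero_or_pos x with h0 | h0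
    · simp [h0, hsub_zero]
    · rw [hsub]
      have hx0 : x ≠ 0 := by omega
      simp only [hx0, if_false]
      set e := Nat.log b x with he
      have hbe : 0 < b ^ e := pow_pos (by omega) _
      have hle : b ^ e ≤ x := Nat.pow_log_le_self b hx0
      have h1 : e ≤ hsub b (b+1) e := ih e (Nat.log_lt_self b hx0)
      have h2 : b ^ e ≤ (b+1) ^ hsub b (b+1) e :=
        le_trans (Nat.pow_le_pow_left (by omega) e) (Nat.pow_le_pow_right (by omega) h1)
      have h3 : x % b ^ e ≤ hsub b (b+1) (x % b ^ e) :=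
        ih _ (lt_of_lt_of_le (Nat.mod_lt _ hbe) hle)
      calc x = b ^ e * (x / b ^ e) + x % b ^ e := (Nat.div_add_mod x (b ^ e)).symm
        _ ≤ (b+1) ^ hsub b (b+1) e * (x / b ^ e) + hsub b (b+1) (x % b ^ e) :=
            Nat.add_le_add (Nat.mul_le_mul_right _ h2) h3

lemma hsub_gt (b x : ℕ) (hb : 2 ≤ b) (hx : b ≤ x) : x + 1 ≤ hsub b (b+1) x := by
  rw [hsub]
  have hx0 : x ≠ 0 := by omega
  simp only [hx0, if_false]
  set e := Nat.log b x with he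
  have he1 : 1 ≤ e := Nat.log_pos (by omega) hx
  have hbe : 0 < b ^ e := pow_pos (by omega) _
  have hle : b ^ e ≤ x := Nat.pow_log_le_self b hx0
  have h1 : e ≤ hsub b (b+1) e := hsub_ge b hb e
  have h2 : b ^ e + 1 ≤ (b+1) ^ hsub b (b+1) e := by
    have : b ^ e < (b+1) ^ e := Nat.pow_lt_pow_left (by omega) (by omega)
    have h' : (b+1) ^ e ≤ (b+1) ^ hsub b (b+1) e := Nat.pow_le_pow_right (by omega) h1
    omega
  have h3 : x % b ^ e ≤ hsub b (b+1) (x % b ^ e) :=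
    hsub_ge b hb _
  have hq : 1 ≤ x / b ^ e := Nat.one_le_div_iff hbe |>.mpr hle
  have key : (b ^ e + 1) * (x / b ^ e) + x % b ^ e ≤
      (b+1) ^ hsub b (b+1) e * (x / b ^ e) + hsub b (b+1) (x % b ^ e) :=
    Nat.add_le_add (Nat.mul_le_mul_right _ h2) h3
  have hx' : b ^ e * (x / b ^ e) + x % b ^ e = x := Nat.div_add_mod x (b ^ e)
  nlinarith [hx', hq, key]

lemma G_succ (j m : ℕ) (hj : 1 ≤ j) : G (j+1) m = B (j+1) (G j m) - 1 := by
  cases j with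
  | zero => omega
  | succ k => rfl

/-- **Lemma 6**: let `m ≥ 2` and let `n` be the least natural number (`n ≥ 1`)
with `G n m = 0`. Then `n = 2 * n₁` with `n₁ ≥ 2`, and `G (n₁ - 1) m = n₁`
(i.e., the hereditary representation of the `(n₁-1)`-th term in its base `n₁`
is `1·n₁^1 + 0·n₁^0`). -/
theorem goodstein_lemma6 (m n : ℕ) (hm : 2 ≤ m) (hn1 : 1 ≤ n) (hn : G n m = 0)
    (hmin : ∀ j : ℕ, 1 ≤ j → G j m = 0 → n ≤ j) :
    ∃ n₁ : ℕ, 2 ≤ n₁ ∧ n = 2 * n₁ ∧ G (n₁ - 1) m = n₁ := by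
  have hex : ∃ j, 1 ≤ j ∧ G j m ≤ j := ⟨n, hn1, by omega⟩
  set n₁ := Nat.find hex with hdef
  obtain ⟨hn₁1, hn₁le⟩ := Nat.find_spec hex
  rw [← hdef] at hn₁1 hn₁le
  have hleast : ∀ j, 1 ≤ j → j < n₁ → j + 1 ≤ G j m := by
    intro j h1 h2
    have := Nat.find_min hex h2
    push_neg at this
    have := this h1
    omega
  have hG1 : G 1 m = m := rfl
  have hn₁2 : 2 ≤ n₁ := by
    by_contra h
    have h1 : n₁ = 1 := by omega
    rw [h1, hG1] at hn₁le
    omega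
  -- G (n₁ - 1) m = n₁
  have hprev : n₁ ≤ G (n₁ - 1) m := by
    have := hleast (n₁ - 1) (by omega) (by omega)
    omega
  have hstep : G n₁ m = B n₁ (G (n₁ - 1) m) - 1 := by
    have := G_succ (n₁ - 1) m (by omega)
    have h' : n₁ - 1 + 1 = n₁ := by omega
    rwa [h'] at this
  have hGprev : G (n₁ - 1) m = n₁ := by
    by_contra hne
    have hgt : n₁ + 1 ≤ G (n₁ - 1) m := by omega
    have : G (n₁ - 1) m + 1 ≤ B n₁ (G (n₁ - 1) m) :=
      hsub_gt n₁ _ hn₁2 (by omega)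
    omega
  have hGn₁ : G n₁ m = n₁ := by
    rw [hstep, hGprev]
    have : B n₁ n₁ = n₁ + 1 := hsub_self n₁ (n₁ + 1) hn₁2
    omega
  have hcount : ∀ t, t ≤ n₁ → G (n₁ + t) m = n₁ - t := by
    intro t
    induction t with
    | zero => simpa using hGn₁
    | succ s ih =>
      intro hs
      have hGs : G (n₁ + s) m = n₁ - s := ih (by omega)
      have hstep' : G (n₁ + s + 1) m = B (n₁ + s + 1) (G (n₁ + s) m) - 1 :=
        G_succ (n₁ + s) m (by omega)
      rw [hGs] at hstep'
      have hB : B (n₁ + s + 1) (n₁ - s) = n₁ - s := hsub_lt _ _ _ (by omega)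
      rw [hB] at hstep'
      show G (n₁ + s + 1) m = n₁ - (s + 1)
      omega
  have hzero : G (n₁ + n₁) m = 0 := by
    have := hcount n₁ le_rfl
    omega
  have hle2 : n ≤ 2 * n₁ := by
    have := hmin (n₁ + n₁) (by omega) hzero
    omega
  have hge2 : 2 * n₁ ≤ n := by
    by_contra h
    push_neg at h
    rcases Nat.lt_or_ge n n₁ with h' | h'
    · have := hleast n hn1 h'
      omega
    · have := hcount (n - n₁) (by omega)
      have h'' : n₁ + (n - n₁) = n := by omega
      rw [h''] at this
      omega
  exact ⟨n₁, hn₁2, by omega, hGprev⟩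
end

section
/- Third Goodstein sequence theorem: for every natural number m ≥ 1, the Goodstein sequence G(m) reaches 0 (i.e., there exists n ≥ 1 with G(n, m) = 0) if and only if there exists a natural number k ≥ 2 such that the sequence L(·, k) dominates G(m), in the sense that for every n ≥ 1 with G(n, m) ≠ 0 one has L(n, k) > G(n, m), and L(·, k) itself reaches 0 (i.e., there exists q ≥ 1 with L(q, k) = 0). -/
lemma hsub_eq (b u : ℕ) {m : ℕ} (h : m ≠ 0) :
    hsub b u m = u ^ hsub b u (Nat.log b m) * (m / b ^ Nat.log b m)
      + hsub b u (m % b ^ Nat.log b m) := by rw [hsub]; simp [h]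

lemma O_zero (b : ℕ) : O b 0 = 0 := by rw [O]; simp

lemma O_eq (b : ℕ) {m : ℕ} (h : m ≠ 0) :
    O b m = Ordinal.omega0 ^ O b (Nat.log b m) * ((m / b ^ Nat.log b m : ℕ) : Ordinal)
      + O b (m % b ^ Nat.log b m) := by rw [O]; simp [h]

lemma pow_log_pos {b : ℕ} (hb : 2 ≤ b) (e : ℕ) : 0 < b ^ e := pow_pos (by omega) _

lemma digit_one_le {b m : ℕ} (hb : 2 ≤ b) (hm : m ≠ 0) : 1 ≤ m / b ^ Nat.log b m :=
  (Nat.one_le_div_iff (pow_log_pos hb _)).2 (Nat.pow_log_le_self b hm)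

lemma digit_lt {b m : ℕ} (hb : 2 ≤ b) (hm : m ≠ 0) : m / b ^ Nat.log b m < b := by
  have h1 := Nat.lt_pow_succ_log_self (show 1 < b by omega) m
  rw [Nat.div_lt_iff_lt_mul (pow_log_pos hb _)]
  calc m < b ^ (Nat.log b m).succ := h1
    _ = b * b ^ Nat.log b m := by rw [pow_succ, Nat.mul_comm]

lemma rem_lt {b : ℕ} (hb : 2 ≤ b) (m : ℕ) : m % b ^ Nat.log b m < b ^ Nat.log b m :=
  Nat.mod_lt _ (pow_log_pos hb _)

lemma hsub_aux {b : ℕ} (hb : 2 ≤ b) :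
    ∀ n : ℕ, (∀ x, x < n → hsub b (b+1) x < hsub b (b+1) n) ∧
      (∀ r, r < b ^ n → hsub b (b+1) r < (b+1) ^ hsub b (b+1) n) := by
  intro n
  induction n using Nat.strong_induction_on with
  | _ n IH =>
    have main : ∀ x, x < n → hsub b (b+1) x < hsub b (b+1) n := by
      intro x hx
      have hn0 : n ≠ 0 := by omega
      have hdn1 := digit_one_le hb hn0
      have hpos : 0 < hsub b (b+1) n := by
        rw [hsub_eq b (b+1) hn0]
        have h1 : 0 < (b+1) ^ hsub b (b+1) (Nat.log b n) := pow_pos (by omega) _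
        exact lt_of_lt_of_le (Nat.mul_pos h1 hdn1) (Nat.le_add_right _ _)
      rcases Nat.eq_zero_or_pos x with rfl | hx0
      · rw [hsub_zero]; exact hpos
      have hx0' : x ≠ 0 := by omega
      have hlogx : Nat.log b x < x := Nat.log_lt_self b hx0'
      have hlogn : Nat.log b n < n := Nat.log_lt_self b hn0
      have hdx := digit_lt hb hx0'
      have hEx : hsub b (b+1) (x % b ^ Nat.log b x) < (b+1) ^ hsub b (b+1) (Nat.log b x) :=
        (IH _ (lt_trans hlogx hx)).2 _ (rem_lt hb x)
      have hxlt : hsub b (b+1) x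
          < (b+1) ^ hsub b (b+1) (Nat.log b x) * (x / b ^ Nat.log b x + 1) := by
        rw [hsub_eq b (b+1) hx0', Nat.mul_succ]
        exact Nat.add_lt_add_left hEx _
      have hle : Nat.log b x ≤ Nat.log b n := Nat.log_mono_right (le_of_lt hx)
      rcases lt_or_eq_of_le hle with hlt | heq
      · have hmono : hsub b (b+1) (Nat.log b x) < hsub b (b+1) (Nat.log b n) :=
          (IH _ hlogn).1 _ hlt
        calc hsub b (b+1) x
            < (b+1) ^ hsub b (b+1) (Nat.log b x) * (x / b ^ Nat.log b x + 1) := hxlt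
          _ ≤ (b+1) ^ hsub b (b+1) (Nat.log b x) * (b+1) := mul_le_mul_right (by omega) _
          _ = (b+1) ^ (hsub b (b+1) (Nat.log b x) + 1) := by rw [pow_succ]
          _ ≤ (b+1) ^ hsub b (b+1) (Nat.log b n) := Nat.pow_le_pow_right (by omega) (by omega)
          _ ≤ (b+1) ^ hsub b (b+1) (Nat.log b n) * (n / b ^ Nat.log b n) :=
              Nat.le_mul_of_pos_right _ hdn1
          _ ≤ hsub b (b+1) n := by rw [hsub_eq b (b+1) hn0]; exact Nat.le_add_right _ _
      · have hdle : x / b ^ Nat.log b n ≤ n / b ^ Nat.log b n :=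
          Nat.div_le_div_right (le_of_lt hx)
        rcases lt_or_eq_of_le hdle with hdlt | hdeq
        · calc hsub b (b+1) x
              < (b+1) ^ hsub b (b+1) (Nat.log b x) * (x / b ^ Nat.log b x + 1) := hxlt
            _ ≤ (b+1) ^ hsub b (b+1) (Nat.log b n) * (n / b ^ Nat.log b n) := by
                rw [heq]; exact mul_le_mul_right (by omega) _
            _ ≤ hsub b (b+1) n := by rw [hsub_eq b (b+1) hn0]; exact Nat.le_add_right _ _
        · have hxdec := Nat.div_add_mod x (b ^ Nat.log b n)
          have hndec := Nat.div_add_mod n (b ^ Nat.log b n)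
          have hrlt : x % b ^ Nat.log b n < n % b ^ Nat.log b n := by
            rw [hdeq] at hxdec; omega
          have hrn_lt_n : n % b ^ Nat.log b n < n :=
            lt_of_lt_of_le (rem_lt hb n) (Nat.pow_log_le_self b hn0)
          have hrmono := (IH _ hrn_lt_n).1 _ hrlt
          rw [hsub_eq b (b+1) hx0', hsub_eq b (b+1) hn0, heq, hdeq]
          exact Nat.add_lt_add_left hrmono _
    refine ⟨main, ?_⟩
    intro r hr
    rcases Nat.eq_zero_or_pos r with rfl | hr0
    · rw [hsub_zero]; exact pow_pos (by omega) _
    have hr0' : r ≠ 0 := by omega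
    have hlr : Nat.log b r < n := Nat.log_lt_of_lt_pow hr0' hr
    have hmono : hsub b (b+1) (Nat.log b r) < hsub b (b+1) n := main _ hlr
    have hrr : hsub b (b+1) (r % b ^ Nat.log b r) < (b+1) ^ hsub b (b+1) (Nat.log b r) :=
      (IH _ hlr).2 _ (rem_lt hb r)
    have hdr := digit_lt hb hr0'
    calc hsub b (b+1) r
        < (b+1) ^ hsub b (b+1) (Nat.log b r) * (r / b ^ Nat.log b r + 1) := by
          rw [hsub_eq b (b+1) hr0', Nat.mul_succ]
          exact Nat.add_lt_add_left hrr _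
      _ ≤ (b+1) ^ hsub b (b+1) (Nat.log b r) * (b+1) := mul_le_mul_right (by omega) _
      _ = (b+1) ^ (hsub b (b+1) (Nat.log b r) + 1) := by rw [pow_succ]
      _ ≤ (b+1) ^ hsub b (b+1) n := Nat.pow_le_pow_right (by omega) (by omega)

open Ordinal in
lemma O_aux {b : ℕ} (hb : 2 ≤ b) :
    ∀ n : ℕ, (∀ x, x < n → O.{0} b x < O.{0} b n) ∧
      (∀ r, r < b ^ n → O.{0} b r < omega0.{0} ^ O.{0} b n) := by
  intro n
  induction n using Nat.strong_induction_on with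
  | _ n IH =>
    have main : ∀ x, x < n → O b x < O b n := by
      intro x hx
      have hn0 : n ≠ 0 := by omega
      have hdn1 := digit_one_le hb hn0
      have hdn1' : (1 : Ordinal) ≤ ((n / b ^ Nat.log b n : ℕ) : Ordinal) := by
        exact_mod_cast hdn1
      have hpos : 0 < O b n := by
        rw [O_eq b hn0]
        have h1 : (0:Ordinal) < omega0 ^ O b (Nat.log b n) := opow_pos _ omega0_pos
        exact lt_of_lt_of_le (mul_pos h1 (by exact_mod_cast hdn1))
          (le_self_add)
      rcases Nat.eq_zero_or_pos x with rfl | hx0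
      · rw [O_zero]; exact hpos
      have hx0' : x ≠ 0 := by omega
      have hlogx : Nat.log b x < x := Nat.log_lt_self b hx0'
      have hlogn : Nat.log b n < n := Nat.log_lt_self b hn0
      have hdx := digit_lt hb hx0'
      have hEx : O b (x % b ^ Nat.log b x) < omega0 ^ O b (Nat.log b x) :=
        (IH _ (lt_trans hlogx hx)).2 _ (rem_lt hb x)
      have hxlt : O b x
          < omega0 ^ O b (Nat.log b x) * (((x / b ^ Nat.log b x : ℕ) : Ordinal) + 1) := by
        rw [O_eq b hx0', mul_add, mul_one]
        exact (add_lt_add_iff_left _).2 hEx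
      have hle : Nat.log b x ≤ Nat.log b n := Nat.log_mono_right (le_of_lt hx)
      have hltomega : (((x / b ^ Nat.log b x : ℕ) : Ordinal) + 1) ≤ omega0 := by
        have := Ordinal.nat_lt_omega0 (x / b ^ Nat.log b x + 1)
        rw [Nat.cast_add_one] at this
        exact this.le
      rcases lt_or_eq_of_le hle with hlt | heq
      · have hmono : O b (Nat.log b x) < O b (Nat.log b n) := (IH _ hlogn).1 _ hlt
        calc O b x
            < omega0 ^ O b (Nat.log b x) * (((x / b ^ Nat.log b x : ℕ) : Ordinal) + 1) := hxlt
          _ ≤ omega0 ^ O b (Nat.log b x) * omega0 := mul_le_mul_right hltomega _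
          _ = omega0 ^ (O b (Nat.log b x) + 1) := by rw [opow_add, opow_one]
          _ ≤ omega0 ^ O b (Nat.log b n) :=
              opow_le_opow_right omega0_pos (Order.add_one_le_of_lt hmono)
          _ ≤ omega0 ^ O b (Nat.log b n) * ((n / b ^ Nat.log b n : ℕ) : Ordinal) :=
              le_mul_of_one_le_right' hdn1'
          _ ≤ O b n := by rw [O_eq b hn0]; exact le_self_add
      · have hdle : x / b ^ Nat.log b n ≤ n / b ^ Nat.log b n :=
          Nat.div_le_div_right (le_of_lt hx)
        rcases lt_or_eq_of_le hdle with hdlt | hdeq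
        · calc O b x
              < omega0 ^ O b (Nat.log b x) * (((x / b ^ Nat.log b x : ℕ) : Ordinal) + 1) := hxlt
            _ ≤ omega0 ^ O b (Nat.log b n) * ((n / b ^ Nat.log b n : ℕ) : Ordinal) := by
                rw [heq]
                refine mul_le_mul_right ?_ _
                have : ((x / b ^ Nat.log b n + 1 : ℕ) : Ordinal)
                    ≤ ((n / b ^ Nat.log b n : ℕ) : Ordinal) := by exact_mod_cast hdlt
                rw [Nat.cast_add_one] at this
                exact this
            _ ≤ O b n := by rw [O_eq b hn0]; exact le_self_add
        · have hxdec := Nat.div_add_mod x (b ^ Nat.log b n)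
          have hndec := Nat.div_add_mod n (b ^ Nat.log b n)
          have hrlt : x % b ^ Nat.log b n < n % b ^ Nat.log b n := by
            rw [hdeq] at hxdec; omega
          have hrn_lt_n : n % b ^ Nat.log b n < n :=
            lt_of_lt_of_le (rem_lt hb n) (Nat.pow_log_le_self b hn0)
          have hrmono := (IH _ hrn_lt_n).1 _ hrlt
          rw [O_eq b hx0', O_eq b hn0, heq, hdeq]
          exact (add_lt_add_iff_left _).2 hrmono
    refine ⟨main, ?_⟩
    intro r hr
    rcases Nat.eq_zero_or_pos r with rfl | hr0
    · rw [O_zero]; exact opow_pos _ omega0_pos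
    have hr0' : r ≠ 0 := by omega
    have hlr : Nat.log b r < n := Nat.log_lt_of_lt_pow hr0' hr
    have hmono : O b (Nat.log b r) < O b n := main _ hlr
    have hrr : O b (r % b ^ Nat.log b r) < omega0 ^ O b (Nat.log b r) :=
      (IH _ hlr).2 _ (rem_lt hb r)
    have hltomega : (((r / b ^ Nat.log b r : ℕ) : Ordinal) + 1) ≤ omega0 := by
      have := Ordinal.nat_lt_omega0 (r / b ^ Nat.log b r + 1)
      rw [Nat.cast_add_one] at this
      exact this.le
    calc O b r
        < omega0 ^ O b (Nat.log b r) * (((r / b ^ Nat.log b r : ℕ) : Ordinal) + 1) := by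
          rw [O_eq b hr0', mul_add, mul_one]
          exact (add_lt_add_iff_left _).2 hrr
      _ ≤ omega0 ^ O b (Nat.log b r) * omega0 := mul_le_mul_right hltomega _
      _ = omega0 ^ (O b (Nat.log b r) + 1) := by rw [opow_add, opow_one]
      _ ≤ omega0 ^ O b n := opow_le_opow_right omega0_pos (Order.add_one_le_of_lt hmono)

lemma le_hsub {b u : ℕ} (hb : 1 ≤ b) (hu : b ≤ u) : ∀ m, m ≤ hsub b u m := by
  intro m
  induction m using Nat.strong_induction_on with
  | _ m IH =>
    rcases Nat.eq_zero_or_pos m with rfl | hm0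
    · simp [hsub_zero]
    have hm0' : m ≠ 0 := by omega
    have hlog : Nat.log b m < m := Nat.log_lt_self b hm0'
    have hrem : m % b ^ Nat.log b m < m :=
      lt_of_lt_of_le (Nat.mod_lt _ (pow_pos hb _)) (Nat.pow_log_le_self b hm0')
    have h1 : b ^ Nat.log b m ≤ u ^ hsub b u (Nat.log b m) :=
      le_trans (Nat.pow_le_pow_right hb (IH _ hlog)) (Nat.pow_le_pow_left hu _)
    calc m = b ^ Nat.log b m * (m / b ^ Nat.log b m) + m % b ^ Nat.log b m :=
          (Nat.div_add_mod m _).symm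
      _ ≤ u ^ hsub b u (Nat.log b m) * (m / b ^ Nat.log b m) + hsub b u (m % b ^ Nat.log b m) :=
          Nat.add_le_add (Nat.mul_le_mul_right _ h1) (IH _ hrem)
      _ = hsub b u m := (hsub_eq b u hm0').symm

open Ordinal in
lemma O_hsub {b : ℕ} (hb : 2 ≤ b) : ∀ m, O.{0} (b+1) (hsub b (b+1) m) = O.{0} b m := by
  intro m
  induction m using Nat.strong_induction_on with
  | _ m IH =>
    rcases Nat.eq_zero_or_pos m with rfl | hm0
    · rw [hsub_zero, O_zero, O_zero]
    have hm0' : m ≠ 0 := by omega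
    have hlog : Nat.log b m < m := Nat.log_lt_self b hm0'
    have hrem : m % b ^ Nat.log b m < m :=
      lt_of_lt_of_le (rem_lt hb m) (Nat.pow_log_le_self b hm0')
    have hd1 := digit_one_le hb hm0'
    have hd2 := digit_lt hb hm0'
    have hr : hsub b (b+1) (m % b ^ Nat.log b m) < (b+1) ^ hsub b (b+1) (Nat.log b m) :=
      (hsub_aux hb (Nat.log b m)).2 _ (rem_lt hb m)
    have hrepr := hsub_eq b (b+1) hm0'
    have hlow : (b+1) ^ hsub b (b+1) (Nat.log b m) ≤ hsub b (b+1) m := by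
      rw [hrepr]
      exact le_trans (Nat.le_mul_of_pos_right _ hd1) (Nat.le_add_right _ _)
    have hhigh : hsub b (b+1) m < (b+1) ^ (hsub b (b+1) (Nat.log b m) + 1) := by
      rw [hrepr, pow_succ]
      calc (b+1) ^ hsub b (b+1) (Nat.log b m) * (m / b ^ Nat.log b m)
            + hsub b (b+1) (m % b ^ Nat.log b m)
          < (b+1) ^ hsub b (b+1) (Nat.log b m) * (m / b ^ Nat.log b m + 1) := by
            rw [Nat.mul_succ]; exact Nat.add_lt_add_left hr _
        _ ≤ (b+1) ^ hsub b (b+1) (Nat.log b m) * (b+1) := mul_le_mul_right (by omega) _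
    have hne : hsub b (b+1) m ≠ 0 := by
      have : 0 < (b+1) ^ hsub b (b+1) (Nat.log b m) := pow_pos (by omega) _
      omega
    have hlogeq : Nat.log (b+1) (hsub b (b+1) m) = hsub b (b+1) (Nat.log b m) :=
      Nat.log_eq_of_pow_le_of_lt_pow hlow hhigh
    have hdiv : hsub b (b+1) m / (b+1) ^ hsub b (b+1) (Nat.log b m) = m / b ^ Nat.log b m := by
      rw [hrepr, Nat.mul_add_div (pow_pos (by omega) _), Nat.div_eq_of_lt hr,
        Nat.add_zero]
    have hmod : hsub b (b+1) m % (b+1) ^ hsub b (b+1) (Nat.log b m)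
        = hsub b (b+1) (m % b ^ Nat.log b m) := by
      rw [hrepr, Nat.mul_add_mod, Nat.mod_eq_of_lt hr]
    rw [O_eq (b+1) hne, hlogeq, hdiv, hmod, IH _ hlog, IH _ hrem, ← O_eq b hm0']

lemma B_zero (b : ℕ) : B b 0 = 0 := hsub_zero b (b+1)

lemma G_eventually_zero {m n₀ : ℕ} (h1 : 1 ≤ n₀) (h0 : G n₀ m = 0) :
    ∀ n, n₀ ≤ n → G n m = 0 := by
  intro n hn
  induction n, hn using Nat.le_induction with
  | base => exact h0
  | succ n hn IHn =>
    obtain ⟨j, rfl⟩ : ∃ j, n = j + 1 := ⟨n - 1, by omega⟩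
    show B (j+2) (G (j+1) m) - 1 = 0
    rw [IHn, B_zero]

lemma L_reaches_zero {k : ℕ} (hk : 2 ≤ k) : ∃ q, 1 ≤ q ∧ L q k = 0 := by
  by_contra hcon
  push_neg at hcon
  have hne : ∀ n, L (n+1) k ≠ 0 := fun n => hcon (n+1) (by omega)
  have step : ∀ n, O.{0} (k+n+1) (L (n+2) k) < O.{0} (k+n) (L (n+1) k) := by
    intro n
    have hx := hne n
    have hB : L (n+1) k ≤ B (k+n) (L (n+1) k) := le_hsub (by omega) (by omega) _
    have h1 : L (n+2) k < B (k+n) (L (n+1) k) := by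
      have h2 : L (n+2) k = B (k+n) (L (n+1) k) - 1 := rfl
      omega
    have h2 : O.{0} (k+n+1) (L (n+2) k) < O.{0} (k+n+1) (B (k+n) (L (n+1) k)) :=
      (O_aux (show 2 ≤ k+n+1 by omega) _).1 _ h1
    have h3 : O.{0} (k+n+1) (B (k+n) (L (n+1) k)) = O.{0} (k+n) (L (n+1) k) :=
      O_hsub (show 2 ≤ k+n by omega) _
    rw [h3] at h2
    exact h2
  have hdesc : ∀ (o : Ordinal.{0}), ∀ n, O.{0} (k+n) (L (n+1) k) = o → False := by
    intro o
    induction o using Ordinal.induction with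
    | _ o IHo =>
      intro n hn
      exact IHo _ (hn ▸ step n) (n+1) rfl
  exact hdesc _ 0 rfl

lemma L_lower {k : ℕ} (hk : 2 ≤ k) : ∀ n, k ^ k ≤ L (n+1) k + n := by
  intro n
  induction n with
  | zero => simp [L]
  | succ n IHn =>
    show k ^ k ≤ L (n+2) k + (n+1)
    have hstep : L (n+2) k = B (k+n) (L (n+1) k) - 1 := rfl
    rcases Nat.eq_zero_or_pos (L (n+1) k) with h0 | h0
    · have hz : L (n+2) k = 0 := by rw [hstep, h0, B_zero]
      omega
    · have hB : L (n+1) k ≤ B (k+n) (L (n+1) k) := le_hsub (by omega) (by omega) _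
      omega


/-- **Third Goodstein sequence theorem**: for every `m ≥ 1`, the Goodstein
sequence of `m` reaches `0` if and only if there exists `k ≥ 2` such that
`L · k` dominates `G · m` (for every `n ≥ 1` with `G n m ≠ 0` one has
`L n k > G n m`) and `L · k` itself reaches `0`. -/
theorem third_goodstein_sequence_theorem (m : ℕ) (hm : 1 ≤ m) :
    (∃ n : ℕ, 1 ≤ n ∧ G n m = 0) ↔
      ∃ k : ℕ, 2 ≤ k ∧ (∀ n : ℕ, 1 ≤ n → G n m ≠ 0 → G n m < L n k) ∧
        (∃ q : ℕ, 1 ≤ q ∧ L q k = 0) := by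
  constructor
  · rintro ⟨n₀, hn₀, h0⟩
    obtain ⟨Mx, hMb0⟩ : ∃ M, ∀ n, n ≤ n₀ → G n m ≤ M :=
      ⟨(Finset.range (n₀+1)).sup (fun n => G n m), fun n hn =>
        Finset.le_sup (f := fun n => G n m) (Finset.mem_range.mpr (by omega))⟩
    refine ⟨Mx + n₀ + 2, by omega, ?_, L_reaches_zero (by omega)⟩
    intro n hn hne
    have hlt : n < n₀ := by
      rcases lt_or_ge n n₀ with h | h
      · exact h
      · exact absurd (G_eventually_zero hn₀ h0 n h) hne
    have hMb : G n m ≤ Mx := hMb0 n (by omega)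
    obtain ⟨j, rfl⟩ : ∃ j, n = j + 1 := ⟨n - 1, by omega⟩
    have hL := L_lower (k := Mx + n₀ + 2) (by omega) j
    have hkk : Mx + n₀ + 2 ≤ (Mx + n₀ + 2) ^ (Mx + n₀ + 2) := Nat.le_self_pow (by omega) _
    omega
  · rintro ⟨k, hk, hdom, q, hq, hLq⟩
    refine ⟨q, hq, ?_⟩
    by_contra hne
    have := hdom q hq hne
    omega
end
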